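/- arXiv:2204.02525 — 2 statements merged into one kernel-verified Lean document; each statement's English description precedes it below -/
import Mathlib

section
/- Let 𝒢 be a periodic evolving graph with period Γ on a finite vertex set V, let G(𝒢) be its emulated graph with extended path set P* = static(𝒫⁰), and let M = (m_{s,d}) be a demand matrix. Then for every legal temporal flow ℱ in 𝒢 achieving throughput θ for M there exists a legal flow F on P* in G(𝒢) achieving throughput θ for M, and conversely for every legal flow F on P* achieving throughput θ for M there exists a legal temporal flow ℱ in 𝒢 achieving throughput θ for M. Consequently, the supremum of throughputs achievable by legal temporal flows in 𝒢 equals the supremum of throughputs achievable by legal flows on P* in G(𝒢). -/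
open scoped ENNReal NNReal BigOperators

namespace RDCN

/-- A directed edge. -/
abbrev Edge (V : Type*) := V × V
/-- A temporal path (or a labelled-edge path): a list of edge/time(label) pairs. -/
abbrev TPath (V : Type*) := List (Edge V × ℕ)
/-- An extended path in the emulated graph: a labelled-edge path together with its
unique identifier (a temporal path). -/
abbrev ExtPath (V : Type*) := TPath V × TPath V

variable {V : Type*}

/-- The vertex sequence of a list of directed edges. -/
def pathVerts (es : List (Edge V)) : List V :=
  match es with
  | [] => []
  | e :: _ => e.1 :: es.map Prod.snd

/-- A nonempty list of directed edges forming a directed path visiting pairwise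
distinct vertices. -/
def IsSimpleEdgePath (es : List (Edge V)) : Prop :=
  es ≠ [] ∧ es.Chain' (fun e e' => e.2 = e'.1) ∧ (pathVerts es).Nodup

/-- `es` is a path from `s` to `d`. -/
def EndpointsOf (es : List (Edge V)) (s d : V) : Prop :=
  es.head?.map Prod.fst = some s ∧ es.getLast?.map Prod.snd = some d

/-- A periodic evolving graph with period `Γ`, timeslot duration `Δ` and
reconfiguration fraction `Δu`. -/
structure PEG (V : Type*) where
  Γ : ℕ
  Γ_pos : 1 ≤ Γ
  E : ℕ → Set (V × V)
  E_periodic : ∀ t, E (t + Γ) = E t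
  c : ℕ → V × V → ℝ≥0
  c_periodic : ∀ t e, c (t + Γ) e = c t e
  c_zero : ∀ t e, e ∉ E t → c t e = 0
  Δ : ℝ≥0
  Δ_pos : 0 < Δ
  Δu : ℝ≥0
  Δu_lt_one : Δu < 1

/-- A legal temporal path in the periodic evolving graph `G`. -/
def IsTemporalPath (G : PEG V) (δ : TPath V) : Prop :=
  δ ≠ [] ∧ (∀ x ∈ δ, x.1 ∈ G.E x.2) ∧
    δ.Chain' (fun x y => x.2 < y.2 ∧ y.2 ≤ x.2 + G.Γ) ∧
    IsSimpleEdgePath (δ.map Prod.fst)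

/-- The foundation set `𝒫⁰`: legal temporal paths starting in the first period. -/
def Foundation (G : PEG V) : Set (TPath V) :=
  {δ | IsTemporalPath G δ ∧ ∀ t₀ : ℕ, δ.head?.map Prod.snd = some t₀ → t₀ < G.Γ}

/-- The temporal path `δ` goes from `s` to `d`. -/
def TEndpoints (δ : TPath V) (s d : V) : Prop :=
  EndpointsOf (δ.map Prod.fst) s d

/-- `𝒫⁰_{s,d}`. -/
def FoundationSD (G : PEG V) (s d : V) : Set (TPath V) :=
  {δ | δ ∈ Foundation G ∧ TEndpoints δ s d}

/-- Shift all times of a temporal path by `k·Γ`. -/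
def shiftPath (Γ k : ℕ) (δ : TPath V) : TPath V :=
  δ.map fun x => (x.1, x.2 + k * Γ)

/-- `𝒫*`: all periodic shifts of foundation paths. -/
def PStar (G : PEG V) : Set (TPath V) :=
  {δ' | ∃ δ ∈ Foundation G, ∃ k : ℕ, δ' = shiftPath G.Γ k δ}

/-- `𝒫*_{s,d}`. -/
def PStarSD (G : PEG V) (s d : V) : Set (TPath V) :=
  {δ | δ ∈ PStar G ∧ TEndpoints δ s d}

/-- A legal temporal flow: nonnegative (enforced by `ℝ≥0`), invariant under
shifting a path's times by `Γ`, and obeying the capacity constraints at all times. -/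
structure IsLegalTemporalFlow (G : PEG V) (F : TPath V → ℝ≥0) : Prop where
  periodic : ∀ δ ∈ PStar G, F (shiftPath G.Γ 1 δ) = F δ
  capacity : ∀ (e : Edge V) (t : ℕ),
    ∑' δ : {δ : TPath V // δ ∈ PStar G ∧ (e, t) ∈ δ}, ((F (δ : TPath V) : ℝ≥0) : ℝ≥0∞)
      ≤ (G.c t e : ℝ≥0∞)

/-- The factor `(1-Δu)/Γ`. -/
noncomputable def capFactor (G : PEG V) : ℝ≥0∞ :=
  ((1 - G.Δu : ℝ≥0) : ℝ≥0∞) / (G.Γ : ℝ≥0∞)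

/-- The temporal flow `F` achieves throughput `θ` for the demand matrix `m`:
`((1-Δu)/Γ)·Σ_{δ ∈ 𝒫⁰_{s,d}} F(δ) ≥ θ·m_{s,d}` for all `s, d`. -/
def AchievesThroughputT (G : PEG V) (F : TPath V → ℝ≥0) (m : V → V → ℝ≥0)
    (θ : ℝ≥0∞) : Prop :=
  ∀ s d : V, θ * (m s d : ℝ≥0∞) ≤
    capFactor G * ∑' δ : FoundationSD G s d, ((F (δ : TPath V) : ℝ≥0) : ℝ≥0∞)

/-- Capacity `ĉ(e,ℓ) = ((1-Δu)/Γ)·c_ℓ(e)` of a labelled edge of the emulated graph. -/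
noncomputable def chat (G : PEG V) (e : Edge V) (ℓ : ℕ) : ℝ≥0∞ :=
  capFactor G * (G.c ℓ e : ℝ≥0∞)

/-- The map `static` sending a temporal path `δ = ⟨(eᵢ,tᵢ)⟩` to the extended path
`(⟨(eᵢ, tᵢ mod Γ)⟩, δ)` with `δ` as the unique identifier. -/
def staticOf (Γ : ℕ) (δ : TPath V) : ExtPath V :=
  (δ.map fun x => (x.1, x.2 % Γ), δ)

/-- `P* = static(𝒫⁰)`, the extended path set of the emulated graph. -/
def PStarStatic (G : PEG V) : Set (ExtPath V) :=
  staticOf G.Γ '' Foundation G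

/-- The extended path `p` goes from `s` to `d`. -/
def SEndpoints (p : ExtPath V) (s d : V) : Prop :=
  EndpointsOf (p.1.map Prod.fst) s d

/-- A legal flow on a set `P` of extended paths of the emulated graph: equal on paths
with identical labelled-edge sequences, and obeying the capacity constraints. -/
structure IsLegalStaticFlow (G : PEG V) (P : Set (ExtPath V)) (F : ExtPath V → ℝ≥0) :
    Prop where
  congr : ∀ p ∈ P, ∀ q ∈ P, p.1 = q.1 → F p = F q
  capacity : ∀ (e : Edge V) (ℓ : ℕ), ℓ < G.Γ →
    ∑' p : {p : ExtPath V // p ∈ P ∧ (e, ℓ) ∈ p.1}, ((F (p : ExtPath V) : ℝ≥0) : ℝ≥0∞)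
      ≤ chat G e ℓ

/-- The flow `F` on the extended path set `P` achieves throughput `θ` for `m`:
`Σ_{p ∈ P_{s,d}} F(p) ≥ θ·m_{s,d}` for all `s, d`. -/
def AchievesThroughputS (P : Set (ExtPath V)) (F : ExtPath V → ℝ≥0) (m : V → V → ℝ≥0)
    (θ : ℝ≥0∞) : Prop :=
  ∀ s d : V, θ * (m s d : ℝ≥0∞) ≤
    ∑' p : {p : ExtPath V // p ∈ P ∧ SEndpoints p s d}, ((F (p : ExtPath V) : ℝ≥0) : ℝ≥0∞)

/-- First time of a temporal path. -/
def tStart (δ : TPath V) : ℕ := (δ.head?.map Prod.snd).getD 0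
/-- Last time of a temporal path. -/
def tEnd (δ : TPath V) : ℕ := (δ.getLast?.map Prod.snd).getD 0

/-- The delay `L(δ) = (t_n − t₁ + 1)·Δ + (Γ−1)·Δ` of a temporal path. -/
noncomputable def delay (G : PEG V) (δ : TPath V) : ℝ≥0∞ :=
  ((tEnd δ - tStart δ + 1 : ℕ) : ℝ≥0∞) * (G.Δ : ℝ≥0∞) +
    ((G.Γ - 1 : ℕ) : ℝ≥0∞) * (G.Δ : ℝ≥0∞)

/-- `Σ_{δ ∈ 𝒫⁰_{s,d}} F(δ)`. -/
noncomputable def sdSum (G : PEG V) (F : TPath V → ℝ≥0) (s d : V) : ℝ≥0∞ :=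
  ∑' δ : FoundationSD G s d, ((F (δ : TPath V) : ℝ≥0) : ℝ≥0∞)

/-- `r_δ = F(δ)/Σ_{δ' ∈ 𝒫⁰_{s,d}} F(δ')` (with value `0` when the denominator is `0`,
which holds automatically since then `F(δ) = 0` for `δ ∈ 𝒫⁰_{s,d}`). -/
noncomputable def rfrac (G : PEG V) (F : TPath V → ℝ≥0) (s d : V) (δ : TPath V) : ℝ≥0∞ :=
  ((F δ : ℝ≥0) : ℝ≥0∞) / sdSum G F s d

/-- Total demand `M_tot = Σ_{s,d} m_{s,d}`. -/
noncomputable def Mtot [Fintype V] (m : V → V → ℝ≥0) : ℝ≥0∞ :=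
  ∑ s : V, ∑ d : V, (m s d : ℝ≥0∞)

/-- Average route delay `ARD(M,F) = Σ_{s,d} (m_{s,d}/M_tot)·Σ_{δ ∈ 𝒫⁰_{s,d}} r_δ·L(δ)`. -/
noncomputable def ARD [Fintype V] (G : PEG V) (F : TPath V → ℝ≥0) (m : V → V → ℝ≥0) :
    ℝ≥0∞ :=
  ∑ s : V, ∑ d : V, ((m s d : ℝ≥0∞) / Mtot m) *
    ∑' δ : FoundationSD G s d, rfrac G F s d (δ : TPath V) * delay G (δ : TPath V)

/-- Average route length
`ARL(M,F) = Σ_{s,d} Σ_{δ ∈ 𝒫⁰_{s,d}} (m_{s,d}/M_tot)·r_δ·len(δ)`. -/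
noncomputable def ARLt [Fintype V] (G : PEG V) (F : TPath V → ℝ≥0) (m : V → V → ℝ≥0) :
    ℝ≥0∞ :=
  ∑ s : V, ∑ d : V, ∑' δ : FoundationSD G s d,
    ((m s d : ℝ≥0∞) / Mtot m) * rfrac G F s d (δ : TPath V) * ((δ : TPath V).length : ℝ≥0∞)


section Auxiliary

variable {V : Type*}

lemma shiftPath_zero (Γ : ℕ) (δ : TPath V) : shiftPath Γ 0 δ = δ := by
  simp [shiftPath]

lemma shiftPath_shiftPath (Γ k j : ℕ) (δ : TPath V) :
    shiftPath Γ j (shiftPath Γ k δ) = shiftPath Γ (k + j) δ := by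
  simp only [shiftPath, List.map_map]
  apply List.map_congr_left
  intro x _
  simp only [Function.comp_apply]
  congr 1
  ring

/-- Two naturals in a window of length `Γ` that agree mod `Γ` are equal. -/
lemma eq_of_mod_eq_window {Γ a b t : ℕ} (_hΓ : 1 ≤ Γ) (ha1 : t < a) (ha2 : a ≤ t + Γ)
    (hb1 : t < b) (hb2 : b ≤ t + Γ) (h : a % Γ = b % Γ) : a = b := by
  rcases Nat.lt_trichotomy a b with h1 | h1 | h1
  · exfalso
    have hd : Γ ∣ b - a := (Nat.modEq_iff_dvd' h1.le).mp h
    have := Nat.le_of_dvd (by omega) hd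
    omega
  · exact h1
  · exfalso
    have hd : Γ ∣ a - b := (Nat.modEq_iff_dvd' h1.le).mp h.symm
    have := Nat.le_of_dvd (by omega) hd
    omega

lemma edges_nodup {es : List (Edge V)} (h : IsSimpleEdgePath es) : es.Nodup := by
  obtain ⟨hne, -, hnd⟩ := h
  cases es with
  | nil => simp
  | cons e es' =>
      have h2 : ((e :: es').map Prod.snd).Nodup := by
        have : pathVerts (e :: es') = e.1 :: (e :: es').map Prod.snd := rfl
        rw [this] at hnd
        exact hnd.of_cons
      exact h2.of_map

lemma time_unique {G : PEG V} {δ : TPath V} (h : IsTemporalPath G δ)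
    {e : Edge V} {t t' : ℕ} (h1 : (e, t) ∈ δ) (h2 : (e, t') ∈ δ) : t = t' := by
  have hnd : (δ.map Prod.fst).Nodup := by
    have := edges_nodup h.2.2.2
    simpa using this
  have := List.inj_on_of_nodup_map hnd h1 h2 rfl
  exact congrArg Prod.snd this

end Auxiliary
section Aux2
variable {V : Type*}

lemma foundation_head_lt {G : PEG V} {δ : TPath V} (h : δ ∈ Foundation G)
    {x : Edge V × ℕ} (hx : δ.head? = some x) : x.2 < G.Γ :=
  h.2 x.2 (by rw [hx]; rfl)

lemma foundation_ne_nil {G : PEG V} {δ : TPath V} (h : δ ∈ Foundation G) : δ ≠ [] :=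
  h.1.1

/-- The labelled sequence determines the foundation path. -/
lemma times_det {G : PEG V} :
    ∀ (l l' : TPath V),
      l.map (fun x => (x.1, x.2 % G.Γ)) = l'.map (fun x => (x.1, x.2 % G.Γ)) →
      l.Chain' (fun x y => x.2 < y.2 ∧ y.2 ≤ x.2 + G.Γ) →
      l'.Chain' (fun x y => x.2 < y.2 ∧ y.2 ≤ x.2 + G.Γ) →
      (∀ a b : Edge V × ℕ, l.head? = some a → l'.head? = some b → a.2 = b.2) →
      l = l' := by
  intro l
  induction l with
  | nil =>
      intro l' hmap _ _ _
      cases l' with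
      | nil => rfl
      | cons y ys => simp at hmap
  | cons x xs ih =>
      intro l' hmap hc hc' hh
      cases l' with
      | nil => simp at hmap
      | cons y ys =>
          simp only [List.map_cons, List.cons.injEq, Prod.mk.injEq] at hmap
          obtain ⟨⟨he, -⟩, htail⟩ := hmap
          have hxy : x.2 = y.2 := hh x y rfl rfl
          have hx1 : x = y := Prod.ext he hxy
          subst hx1
          congr 1
          apply ih ys htail hc.tail hc'.tail
          intro a b ha hb
          -- a, b are heads of xs, ys; their mod values agree
          have hmod : a.2 % G.Γ = b.2 % G.Γ := by
            have h1 : (xs.map (fun x => (x.1, x.2 % G.Γ))).head? =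
                (ys.map (fun x => (x.1, x.2 % G.Γ))).head? := by rw [htail]
            rw [List.head?_map, List.head?_map, ha, hb] at h1
            simpa using congrArg Prod.snd (Option.some.inj h1)
          have hra : x.2 < a.2 ∧ a.2 ≤ x.2 + G.Γ :=
            (List.isChain_cons.mp hc).1 a ha
          have hrb : x.2 < b.2 ∧ b.2 ≤ x.2 + G.Γ :=
            (List.isChain_cons.mp hc').1 b hb
          exact eq_of_mod_eq_window G.Γ_pos hra.1 hra.2 hrb.1 hrb.2 hmod

lemma static_inj {G : PEG V} {δ δ' : TPath V} (h : δ ∈ Foundation G)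
    (h' : δ' ∈ Foundation G)
    (heq : δ.map (fun x => (x.1, x.2 % G.Γ)) = δ'.map (fun x => (x.1, x.2 % G.Γ))) :
    δ = δ' := by
  apply times_det δ δ' heq h.1.2.2.1 h'.1.2.2.1
  intro a b ha hb
  have h1 := foundation_head_lt h ha
  have h2 := foundation_head_lt h' hb
  have hmod : a.2 % G.Γ = b.2 % G.Γ := by
    have h3 : (δ.map (fun x => (x.1, x.2 % G.Γ))).head? =
        (δ'.map (fun x => (x.1, x.2 % G.Γ))).head? := by rw [heq]
    rw [List.head?_map, List.head?_map, ha, hb] at h3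
    simpa using congrArg Prod.snd (Option.some.inj h3)
  rwa [Nat.mod_eq_of_lt h1, Nat.mod_eq_of_lt h2] at hmod

lemma shift_unique {G : PEG V} {δ₀ δ₁ : TPath V} (h0 : δ₀ ∈ Foundation G)
    (h1 : δ₁ ∈ Foundation G) {k k' : ℕ}
    (heq : shiftPath G.Γ k δ₀ = shiftPath G.Γ k' δ₁) : δ₀ = δ₁ ∧ k = k' := by
  obtain ⟨x, xs, hx⟩ := List.exists_cons_of_ne_nil (foundation_ne_nil h0)
  obtain ⟨y, ys, hy⟩ := List.exists_cons_of_ne_nil (foundation_ne_nil h1)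
  have hxΓ : x.2 < G.Γ := foundation_head_lt h0 (by rw [hx]; rfl)
  have hyΓ : y.2 < G.Γ := foundation_head_lt h1 (by rw [hy]; rfl)
  have hh : x.2 + k * G.Γ = y.2 + k' * G.Γ := by
    have := congrArg List.head? heq
    rw [hx, hy] at this
    simpa [shiftPath] using congrArg Prod.snd (Option.some.inj this)
  have hkk : k = k' := by
    have e1 : (x.2 + k * G.Γ) % G.Γ = x.2 := by
      rw [Nat.add_mul_mod_self_right, Nat.mod_eq_of_lt hxΓ]
    have e2 : (y.2 + k' * G.Γ) % G.Γ = y.2 := by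
      rw [Nat.add_mul_mod_self_right, Nat.mod_eq_of_lt hyΓ]
    have hxy : x.2 = y.2 := by rw [← e1, ← e2, hh]
    have : k * G.Γ = k' * G.Γ := by omega
    exact Nat.eq_of_mul_eq_mul_right (by omega) this
  subst hkk
  refine ⟨?_, rfl⟩
  have hinj : Function.Injective (fun z : Edge V × ℕ => (z.1, z.2 + k * G.Γ)) := by
    intro a b hab
    simp only [Prod.mk.injEq] at hab
    exact Prod.ext hab.1 (by omega)
  exact List.map_injective_iff.mpr hinj heq

end Aux2
section Aux3
variable {V : Type*}

lemma mem_pstar_shift {G : PEG V} {δ : TPath V} (h : δ ∈ Foundation G) (k : ℕ) :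
    shiftPath G.Γ k δ ∈ PStar G := ⟨δ, h, k, rfl⟩

lemma foundation_mem_pstar {G : PEG V} {δ : TPath V} (h : δ ∈ Foundation G) :
    δ ∈ PStar G := by
  have := mem_pstar_shift h 0
  rwa [shiftPath_zero] at this

open Classical in
noncomputable def baseP (G : PEG V) (δ : TPath V) : TPath V :=
  if h : δ ∈ PStar G then h.choose else []

lemma baseP_spec {G : PEG V} {δ : TPath V} (h : δ ∈ PStar G) :
    baseP G δ ∈ Foundation G ∧ ∃ k, δ = shiftPath G.Γ k (baseP G δ) := by
  classical
  rw [baseP]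
  rw [dif_pos h]
  exact h.choose_spec

lemma baseP_eq {G : PEG V} {δ δ₀ : TPath V} (h0 : δ₀ ∈ Foundation G) {k : ℕ}
    (h : δ = shiftPath G.Γ k δ₀) : baseP G δ = δ₀ := by
  have hp : δ ∈ PStar G := h ▸ mem_pstar_shift h0 k
  obtain ⟨hb, k', hk'⟩ := baseP_spec hp
  exact (shift_unique hb h0 (hk' ▸ h)).1

lemma flow_shift {G : PEG V} {F : TPath V → ℝ≥0} (hF : IsLegalTemporalFlow G F)
    {δ : TPath V} (h : δ ∈ Foundation G) (k : ℕ) : F (shiftPath G.Γ k δ) = F δ := by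
  induction k with
  | zero => rw [shiftPath_zero]
  | succ n ih =>
      have hp := hF.periodic (shiftPath G.Γ n δ) (mem_pstar_shift h n)
      rw [shiftPath_shiftPath] at hp
      rw [hp, ih]

lemma c_shift (G : PEG V) (k t : ℕ) (e : Edge V) : G.c (t + k * G.Γ) e = G.c t e := by
  induction k with
  | zero => simp
  | succ n ih =>
      rw [show t + (n + 1) * G.Γ = t + n * G.Γ + G.Γ by ring, G.c_periodic, ih]

lemma chain_time_bound {Γ : ℕ} :
    ∀ (δ : TPath V) (B : ℕ),
      δ.Chain' (fun x y => x.2 < y.2 ∧ y.2 ≤ x.2 + Γ) →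
      (∀ x : Edge V × ℕ, δ.head? = some x → x.2 < B) →
      ∀ x ∈ δ, x.2 < B + Γ * δ.length := by
  intro δ
  induction δ with
  | nil => intro B _ _ x hx; simp at hx
  | cons a l ih =>
      intro B hc hh x hx
      rcases List.mem_cons.mp hx with rfl | hx
      · have := hh x rfl; simp only [List.length_cons]
        calc x.2 < B := this
          _ ≤ B + Γ * (l.length + 1) := Nat.le_add_right _ _
      · have hb : ∀ y : Edge V × ℕ, l.head? = some y → y.2 < B + Γ := by
          intro y hy
          have := (List.isChain_cons.mp hc).1 y hy
          have ha := hh a rfl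
          omega
        have := ih (B + Γ) hc.tail hb x hx
        simp only [List.length_cons]
        calc x.2 < B + Γ + Γ * l.length := this
          _ ≤ B + Γ * (l.length + 1) := by rw [Nat.mul_add, Nat.mul_one]; omega

lemma foundation_length_lt [Fintype V] {G : PEG V} {δ : TPath V}
    (h : δ ∈ Foundation G) : δ.length < Fintype.card V := by
  obtain ⟨x, xs, hx⟩ := List.exists_cons_of_ne_nil (foundation_ne_nil h)
  have hnd := h.1.2.2.2.2.2
  subst hx
  have hpv : pathVerts ((x :: xs).map Prod.fst) =
      (x.1).1 :: ((x :: xs).map Prod.fst).map Prod.snd := rfl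
  rw [hpv] at hnd
  have := hnd.length_le_card
  simpa using this

lemma foundation_time_lt [Fintype V] {G : PEG V} {δ : TPath V} (h : δ ∈ Foundation G)
    {e : Edge V} {t : ℕ} (ht : (e, t) ∈ δ) : t < G.Γ * (Fintype.card V + 1) := by
  have hb := chain_time_bound δ G.Γ h.1.2.2.1
    (fun x hx => foundation_head_lt h hx) (e, t) ht
  have hlen : δ.length < Fintype.card V := foundation_length_lt h
  have h2 : G.Γ * δ.length ≤ G.Γ * Fintype.card V :=
    Nat.mul_le_mul_left _ hlen.le
  have h3 : G.Γ * (Fintype.card V + 1) = G.Γ * Fintype.card V + G.Γ := by ring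
  omega

end Aux3
section Aux4
variable {V : Type*}

lemma mem_pstarstatic {G : PEG V} {p : ExtPath V} (h : p ∈ PStarStatic G) :
    p.2 ∈ Foundation G ∧ staticOf G.Γ p.2 = p := by
  obtain ⟨δ₀, h1, h2⟩ := h
  have : p.2 = δ₀ := by rw [← h2]; rfl
  rw [this]
  exact ⟨h1, h2⟩

lemma staticOf_fst_map (Γ : ℕ) (δ : TPath V) :
    (staticOf Γ δ).1.map Prod.fst = δ.map Prod.fst := by
  simp [staticOf, List.map_map]

lemma sendpoints_static {Γ : ℕ} {δ : TPath V} {s d : V} :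
    SEndpoints (staticOf Γ δ) s d ↔ TEndpoints δ s d := by
  unfold SEndpoints TEndpoints
  rw [staticOf_fst_map]

noncomputable def cfN (G : PEG V) : ℝ≥0 := (1 - G.Δu) / (G.Γ : ℝ≥0)

lemma cfN_ne_zero (G : PEG V) : cfN G ≠ 0 := by
  apply div_ne_zero
  · have : (0 : ℝ≥0) < 1 - G.Δu := tsub_pos_of_lt G.Δu_lt_one
    exact this.ne'
  · have : (0 : ℕ) < G.Γ := G.Γ_pos
    exact_mod_cast Nat.cast_ne_zero.mpr this.ne'

lemma coe_cfN (G : PEG V) : ((cfN G : ℝ≥0) : ℝ≥0∞) = capFactor G := by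
  rw [cfN, capFactor, ENNReal.coe_div]
  · norm_cast
  · have : (0 : ℕ) < G.Γ := G.Γ_pos
    exact_mod_cast Nat.cast_ne_zero.mpr this.ne'

lemma capFactor_ne_zero (G : PEG V) : capFactor G ≠ 0 := by
  rw [← coe_cfN]
  exact_mod_cast cfN_ne_zero G

lemma capFactor_ne_top (G : PEG V) : capFactor G ≠ ⊤ := by
  rw [← coe_cfN]
  exact ENNReal.coe_ne_top

open Classical in
noncomputable def timeIn (δ : TPath V) (e : Edge V) : ℕ :=
  if h : ∃ t, (e, t) ∈ δ then h.choose else 0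

lemma timeIn_mem {δ : TPath V} {e : Edge V} {t : ℕ} (h : (e, t) ∈ δ) :
    (e, timeIn δ e) ∈ δ := by
  classical
  rw [timeIn]
  rw [dif_pos ⟨t, h⟩]
  exact Exists.choose_spec (⟨t, h⟩ : ∃ t, (e, t) ∈ δ)

lemma timeIn_eq {G : PEG V} {δ : TPath V} (hδ : IsTemporalPath G δ) {e : Edge V}
    {t : ℕ} (h : (e, t) ∈ δ) : timeIn δ e = t :=
  time_unique hδ (timeIn_mem h) h

noncomputable def sdEquiv (G : PEG V) (s d : V) :
    (FoundationSD G s d) ≃ {p : ExtPath V // p ∈ PStarStatic G ∧ SEndpoints p s d} where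
  toFun δ := ⟨staticOf G.Γ δ.1, ⟨δ.1, δ.2.1, rfl⟩, sendpoints_static.mpr δ.2.2⟩
  invFun p := ⟨p.1.2, (mem_pstarstatic p.2.1).1, by
    have h2 := (mem_pstarstatic p.2.1).2
    have := p.2.2
    rw [← h2] at this
    exact sendpoints_static.mp this⟩
  left_inv δ := rfl
  right_inv p := Subtype.ext (mem_pstarstatic p.2.1).2

end Aux4
section Dir1
variable {V : Type*}

lemma dir1 [Fintype V] (G : PEG V) (m : V → V → ℝ≥0)
    (F : TPath V → ℝ≥0) (θ : ℝ≥0∞) (hF : IsLegalTemporalFlow G F)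
    (hT : AchievesThroughputT G F m θ) :
    ∃ F' : ExtPath V → ℝ≥0, IsLegalStaticFlow G (PStarStatic G) F' ∧
      AchievesThroughputS (PStarStatic G) F' m θ := by
  refine ⟨fun p => cfN G * F p.2, ⟨?_, ?_⟩, ?_⟩
  · -- congruence on identical labelled sequences
    intro p hp q hq hpq
    obtain ⟨hpF, hpE⟩ := mem_pstarstatic hp
    obtain ⟨hqF, hqE⟩ := mem_pstarstatic hq
    have hmapeq : p.2.map (fun x => (x.1, x.2 % G.Γ)) =
        q.2.map (fun x => (x.1, x.2 % G.Γ)) := by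
      have e1 : (staticOf G.Γ p.2).1 = p.1 := by rw [hpE]
      have e2 : (staticOf G.Γ q.2).1 = q.1 := by rw [hqE]
      calc p.2.map (fun x => (x.1, x.2 % G.Γ)) = p.1 := e1
        _ = q.1 := hpq
        _ = q.2.map (fun x => (x.1, x.2 % G.Γ)) := e2.symm
    have h2 := static_inj hpF hqF hmapeq
    simp only [h2]
  · -- capacity
    intro e ℓ hℓ
    set K := Fintype.card V + 1 with hK
    have hcap := hF.capacity e (ℓ + K * G.Γ)
    have hdata : ∀ a : {p : ExtPath V // p ∈ PStarStatic G ∧ (e, ℓ) ∈ p.1},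
        shiftPath G.Γ (K - timeIn a.1.2 e / G.Γ) a.1.2 ∈ PStar G ∧
          (e, ℓ + K * G.Γ) ∈ shiftPath G.Γ (K - timeIn a.1.2 e / G.Γ) a.1.2 := by
      intro a
      obtain ⟨hpF, hpE⟩ := mem_pstarstatic a.2.1
      refine ⟨mem_pstar_shift hpF _, ?_⟩
      have hmem : (e, ℓ) ∈ (staticOf G.Γ a.1.2).1 := by rw [hpE]; exact a.2.2
      obtain ⟨⟨x1, x2⟩, hx, hxe⟩ := List.mem_map.mp hmem
      simp only [Prod.mk.injEq] at hxe
      obtain ⟨hx1, hx2⟩ := hxe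
      rw [hx1] at hx
      have hmem2 : (e, x2) ∈ a.1.2 := hx
      have ht : timeIn a.1.2 e = x2 := timeIn_eq hpF.1 hmem2
      have htmod : timeIn a.1.2 e % G.Γ = ℓ := by rw [ht]; exact hx2
      have hmem3 : (e, timeIn a.1.2 e) ∈ a.1.2 := by rw [ht]; exact hmem2
      obtain ⟨t, hmem3, htmod⟩ : ∃ t, (e, t) ∈ a.1.2 ∧ t % G.Γ = ℓ ∧
          timeIn a.1.2 e = t := ⟨timeIn a.1.2 e, hmem3, htmod, rfl⟩
      obtain ⟨htmod, hteq⟩ := htmod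
      rw [hteq]
      have htlt : t < G.Γ * K := by rw [hK]; exact foundation_time_lt hpF hmem3
      have hq : t / G.Γ < K :=
        (Nat.div_lt_iff_lt_mul G.Γ_pos).mpr (by rwa [Nat.mul_comm] at htlt)
      have harith : t + (K - t / G.Γ) * G.Γ = ℓ + K * G.Γ := by
        have h1 : G.Γ * (t / G.Γ) + ℓ = t := by rw [← htmod]; exact Nat.div_add_mod t G.Γ
        calc t + (K - t / G.Γ) * G.Γ
            = G.Γ * (t / G.Γ) + ℓ + (K - t / G.Γ) * G.Γ := by rw [h1]
          _ = ℓ + (t / G.Γ + (K - t / G.Γ)) * G.Γ := by ring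
          _ = ℓ + K * G.Γ := by rw [Nat.add_sub_cancel' hq.le]
      rw [← harith]
      exact List.mem_map.mpr ⟨(e, t), hmem3, rfl⟩
    set ι : {p : ExtPath V // p ∈ PStarStatic G ∧ (e, ℓ) ∈ p.1} →
        {δ : TPath V // δ ∈ PStar G ∧ (e, ℓ + K * G.Γ) ∈ δ} :=
      fun a => ⟨shiftPath G.Γ (K - timeIn a.1.2 e / G.Γ) a.1.2,
        (hdata a).1, (hdata a).2⟩ with hι
    have hinj : Function.Injective ι := by
      intro a b hab
      have h1 : shiftPath G.Γ (K - timeIn a.1.2 e / G.Γ) a.1.2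
          = shiftPath G.Γ (K - timeIn b.1.2 e / G.Γ) b.1.2 := congrArg Subtype.val hab
      obtain ⟨haF, haE⟩ := mem_pstarstatic a.2.1
      obtain ⟨hbF, hbE⟩ := mem_pstarstatic b.2.1
      have h2 := (shift_unique haF hbF h1).1
      apply Subtype.ext
      rw [← haE, ← hbE, h2]
    have hval : ∀ a, F (ι a).1 = F a.1.2 := fun a =>
      flow_shift hF (mem_pstarstatic a.2.1).1 _
    calc ∑' p : {p : ExtPath V // p ∈ PStarStatic G ∧ (e, ℓ) ∈ p.1},
          (((fun p : ExtPath V => cfN G * F p.2) p.1 : ℝ≥0) : ℝ≥0∞)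
        = (cfN G : ℝ≥0∞) * ∑' p : {p : ExtPath V // p ∈ PStarStatic G ∧ (e, ℓ) ∈ p.1},
            ((F p.1.2 : ℝ≥0) : ℝ≥0∞) := by
          rw [← ENNReal.tsum_mul_left]
          exact tsum_congr fun p => by rw [ENNReal.coe_mul]
      _ ≤ (cfN G : ℝ≥0∞) * ∑' δ : {δ : TPath V // δ ∈ PStar G ∧ (e, ℓ + K * G.Γ) ∈ δ},
            ((F δ.1 : ℝ≥0) : ℝ≥0∞) := by
          apply mul_le_mul_right
          have h3 := ENNReal.tsum_comp_le_tsum_of_injective hinj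
            (fun δ => ((F δ.1 : ℝ≥0) : ℝ≥0∞))
          refine le_trans (le_of_eq (tsum_congr fun a => ?_)) h3
          rw [hval a]
      _ ≤ (cfN G : ℝ≥0∞) * (G.c (ℓ + K * G.Γ) e : ℝ≥0∞) := mul_le_mul_right hcap _
      _ = chat G e ℓ := by rw [c_shift, chat, coe_cfN]
  · -- throughput
    intro s d
    refine le_trans (hT s d) (le_of_eq ?_)
    rw [← coe_cfN, ← ENNReal.tsum_mul_left,
      ← Equiv.tsum_eq (sdEquiv G s d)
        (fun p => (((fun p : ExtPath V => cfN G * F p.2) p.1 : ℝ≥0) : ℝ≥0∞))]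
    exact tsum_congr fun δ => by rw [ENNReal.coe_mul]; rfl

end Dir1
section Dir2
variable {V : Type*}

lemma dir2 (G : PEG V) (m : V → V → ℝ≥0)
    (F' : ExtPath V → ℝ≥0) (θ : ℝ≥0∞) (hF : IsLegalStaticFlow G (PStarStatic G) F')
    (hT : AchievesThroughputS (PStarStatic G) F' m θ) :
    ∃ F : TPath V → ℝ≥0, IsLegalTemporalFlow G F ∧ AchievesThroughputT G F m θ := by
  classical
  refine ⟨fun δ => if h : δ ∈ PStar G then F' (staticOf G.Γ (baseP G δ)) / cfN G else 0,
    ⟨?_, ?_⟩, ?_⟩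
  · -- periodicity
    intro δ hδ
    obtain ⟨δ₀, h0, k, hk⟩ := hδ
    have h1 : shiftPath G.Γ 1 δ ∈ PStar G := by
      rw [hk, shiftPath_shiftPath]; exact mem_pstar_shift h0 _
    rw [dif_pos h1, dif_pos (show δ ∈ PStar G from ⟨δ₀, h0, k, hk⟩)]
    rw [baseP_eq h0 hk, baseP_eq h0 (show shiftPath G.Γ 1 δ = shiftPath G.Γ (k + 1) δ₀ by
      rw [hk, shiftPath_shiftPath])]
  · -- capacity
    intro e t
    have hℓlt : t % G.Γ < G.Γ := Nat.mod_lt _ G.Γ_pos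
    have hcap := hF.capacity e (t % G.Γ) hℓlt
    have hdata : ∀ a : {δ : TPath V // δ ∈ PStar G ∧ (e, t) ∈ δ},
        staticOf G.Γ (baseP G a.1) ∈ PStarStatic G ∧
          (e, t % G.Γ) ∈ (staticOf G.Γ (baseP G a.1)).1 := by
      intro a
      obtain ⟨hbF, k, hk⟩ := baseP_spec a.2.1
      refine ⟨⟨baseP G a.1, hbF, rfl⟩, ?_⟩
      have hmem : (e, t) ∈ shiftPath G.Γ k (baseP G a.1) := hk ▸ a.2.2
      obtain ⟨⟨x1, x2⟩, hx, hxe⟩ := List.mem_map.mp hmem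
      simp only [Prod.mk.injEq] at hxe
      obtain ⟨hx1, hx2⟩ := hxe
      rw [hx1] at hx
      refine List.mem_map.mpr ⟨(e, x2), hx, ?_⟩
      have : x2 % G.Γ = t % G.Γ := by rw [← hx2, Nat.add_mul_mod_self_right]
      rw [this]
    set ι : {δ : TPath V // δ ∈ PStar G ∧ (e, t) ∈ δ} →
        {p : ExtPath V // p ∈ PStarStatic G ∧ (e, t % G.Γ) ∈ p.1} :=
      fun a => ⟨staticOf G.Γ (baseP G a.1), (hdata a).1, (hdata a).2⟩ with hι
    have hinj : Function.Injective ι := by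
      intro a b hab
      have h1 : staticOf G.Γ (baseP G a.1) = staticOf G.Γ (baseP G b.1) :=
        congrArg Subtype.val hab
      have h2 : baseP G a.1 = baseP G b.1 := congrArg Prod.snd h1
      obtain ⟨haF, ka, hka⟩ := baseP_spec a.2.1
      obtain ⟨hbF, kb, hkb⟩ := baseP_spec b.2.1
      rw [h2] at hka
      obtain ⟨⟨x1, x2⟩, hx, hxe⟩ := List.mem_map.mp (hka ▸ a.2.2)
      obtain ⟨⟨y1, y2⟩, hy, hye⟩ := List.mem_map.mp (hkb ▸ b.2.2)
      simp only [Prod.mk.injEq] at hxe hye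
      obtain ⟨hx1, hx2⟩ := hxe
      obtain ⟨hy1, hy2⟩ := hye
      rw [hx1] at hx
      rw [hy1] at hy
      have hxy : x2 = y2 := time_unique hbF.1 hx hy
      rw [hxy] at hx2
      have h5 : ka * G.Γ = kb * G.Γ := by omega
      have h6 : ka = kb := Nat.eq_of_mul_eq_mul_right G.Γ_pos h5
      apply Subtype.ext
      rw [hka, h6]
      exact hkb.symm
    have hval : ∀ a : {δ : TPath V // δ ∈ PStar G ∧ (e, t) ∈ δ},
        (if h : a.1 ∈ PStar G then F' (staticOf G.Γ (baseP G a.1)) / cfN G else 0)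
          = F' (ι a).1 / cfN G := fun a => dif_pos a.2.1
    calc ∑' a : {δ : TPath V // δ ∈ PStar G ∧ (e, t) ∈ δ},
          (((fun δ => if h : δ ∈ PStar G then F' (staticOf G.Γ (baseP G δ)) / cfN G
            else 0) a.1 : ℝ≥0) : ℝ≥0∞)
        = ∑' a : {δ : TPath V // δ ∈ PStar G ∧ (e, t) ∈ δ},
            ((F' (ι a).1 : ℝ≥0∞) * ((cfN G : ℝ≥0∞))⁻¹) := by
          refine tsum_congr fun a => ?_
          rw [show ((fun δ => if h : δ ∈ PStar G then F' (staticOf G.Γ (baseP G δ)) /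
              cfN G else 0) a.1) = F' (ι a).1 / cfN G from hval a]
          rw [ENNReal.coe_div (cfN_ne_zero G), div_eq_mul_inv]
      _ ≤ ∑' b : {p : ExtPath V // p ∈ PStarStatic G ∧ (e, t % G.Γ) ∈ p.1},
            ((F' b.1 : ℝ≥0∞) * ((cfN G : ℝ≥0∞))⁻¹) :=
          ENNReal.tsum_comp_le_tsum_of_injective hinj
            (fun b => (F' b.1 : ℝ≥0∞) * ((cfN G : ℝ≥0∞))⁻¹)
      _ = (∑' b : {p : ExtPath V // p ∈ PStarStatic G ∧ (e, t % G.Γ) ∈ p.1},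
            ((F' b.1 : ℝ≥0) : ℝ≥0∞)) * ((cfN G : ℝ≥0∞))⁻¹ := ENNReal.tsum_mul_right
      _ ≤ chat G e (t % G.Γ) * ((cfN G : ℝ≥0∞))⁻¹ := mul_le_mul_left hcap _
      _ = (G.c (t % G.Γ) e : ℝ≥0∞) := by
          rw [chat, ← coe_cfN, mul_comm (cfN G : ℝ≥0∞), mul_assoc,
            ENNReal.mul_inv_cancel (by exact_mod_cast cfN_ne_zero G) ENNReal.coe_ne_top,
            mul_one]
      _ = (G.c t e : ℝ≥0∞) := by
          conv_rhs => rw [show t = t % G.Γ + t / G.Γ * G.Γ from (Nat.mod_add_div' t G.Γ).symm]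
          rw [c_shift]
  · -- throughput
    intro s d
    refine le_trans (hT s d) (le_of_eq ?_)
    symm
    rw [← Equiv.tsum_eq (sdEquiv G s d) (fun p => ((F' p.1 : ℝ≥0) : ℝ≥0∞))]
    have hFd : ∀ δ : FoundationSD G s d,
        ((if h : (δ : TPath V) ∈ PStar G then F' (staticOf G.Γ (baseP G δ.1)) / cfN G
          else 0) : ℝ≥0)
          = F' (staticOf G.Γ δ.1) / cfN G := by
      intro δ
      rw [dif_pos (foundation_mem_pstar δ.2.1),
        baseP_eq δ.2.1 (shiftPath_zero G.Γ δ.1).symm]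
    calc capFactor G * ∑' δ : FoundationSD G s d,
          (((fun δ => if h : δ ∈ PStar G then F' (staticOf G.Γ (baseP G δ)) / cfN G
            else 0) (δ : TPath V) : ℝ≥0) : ℝ≥0∞)
        = capFactor G * ∑' δ : FoundationSD G s d,
            ((F' (staticOf G.Γ δ.1) : ℝ≥0∞) * ((cfN G : ℝ≥0∞))⁻¹) := by
          congr 1
          refine tsum_congr fun δ => ?_
          show (((if h : (δ : TPath V) ∈ PStar G then
              F' (staticOf G.Γ (baseP G δ.1)) / cfN G else 0) : ℝ≥0) : ℝ≥0∞) = _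
          rw [hFd δ, ENNReal.coe_div (cfN_ne_zero G), div_eq_mul_inv]
      _ = (cfN G : ℝ≥0∞) * ((∑' δ : FoundationSD G s d,
            ((F' (staticOf G.Γ δ.1) : ℝ≥0) : ℝ≥0∞)) * ((cfN G : ℝ≥0∞))⁻¹) := by
          rw [coe_cfN, ENNReal.tsum_mul_right]
      _ = ∑' δ : FoundationSD G s d, ((F' (staticOf G.Γ δ.1) : ℝ≥0) : ℝ≥0∞) := by
          rw [← div_eq_mul_inv]
          exact ENNReal.mul_div_cancel (by exact_mod_cast cfN_ne_zero G) ENNReal.coe_ne_top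
      _ = ∑' δ : FoundationSD G s d,
            ((F' ((sdEquiv G s d) δ).1 : ℝ≥0) : ℝ≥0∞) := rfl

end Dir2
/-- Theorem: Relation to Emulated Graph.
For a periodic evolving graph `G` and a demand matrix `m`: every legal temporal flow
achieving throughput `θ` can be converted to a legal flow on `P* = static(𝒫⁰)` in the
emulated graph achieving throughput `θ`, and vice versa; consequently the suprema of
achievable throughputs coincide. -/
theorem statement0 {V : Type*} [Fintype V] [DecidableEq V] (G : PEG V)
    (m : V → V → ℝ≥0) :
    (∀ (F : TPath V → ℝ≥0) (θ : ℝ≥0∞), IsLegalTemporalFlow G F →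
      AchievesThroughputT G F m θ →
      ∃ F' : ExtPath V → ℝ≥0, IsLegalStaticFlow G (PStarStatic G) F' ∧
        AchievesThroughputS (PStarStatic G) F' m θ) ∧
    (∀ (F' : ExtPath V → ℝ≥0) (θ : ℝ≥0∞), IsLegalStaticFlow G (PStarStatic G) F' →
      AchievesThroughputS (PStarStatic G) F' m θ →
      ∃ F : TPath V → ℝ≥0, IsLegalTemporalFlow G F ∧ AchievesThroughputT G F m θ) ∧
    sSup {θ : ℝ≥0∞ | ∃ F : TPath V → ℝ≥0,
        IsLegalTemporalFlow G F ∧ AchievesThroughputT G F m θ} =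
      sSup {θ : ℝ≥0∞ | ∃ F' : ExtPath V → ℝ≥0,
        IsLegalStaticFlow G (PStarStatic G) F' ∧
          AchievesThroughputS (PStarStatic G) F' m θ} := by
  refine ⟨fun F θ hF hT => dir1 G m F θ hF hT,
    fun F' θ hF hT => dir2 G m F' θ hF hT, ?_⟩
  congr 1
  ext θ
  exact ⟨fun ⟨F, h1, h2⟩ => dir1 G m F θ h1 h2,
    fun ⟨F', h1, h2⟩ => dir2 G m F' θ h1 h2⟩

end RDCN
end

section
/- Let 𝒢 be a periodic evolving graph with period Γ, emulated graph G(𝒢), and extended path set P* = static(𝒫⁰), and let M be a demand matrix. Let P be the set of all simple directed paths in G(𝒢) (sequences of labelled edges forming a path visiting pairwise distinct vertices). If F : P → ℝ≥0 is a legal flow in G(𝒢) achieving throughput θ for M, then the flow F′ : P* → ℝ≥0 defined by F′(p′) = F(p)/|I(p)| for every p ∈ P and every p′ ∈ I(p), where I(p) ⊆ P* is the (nonempty, finite) set of extended paths whose labelled-edge sequence is identical to that of p, is a legal flow on P* achieving throughput θ for M. -/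
open scoped ENNReal NNReal BigOperators

namespace RDCN

variable {V : Type*}

/-- The set `P` of all simple directed paths in the emulated graph `G(𝒢)`:
sequences of labelled edges (each a labelled edge of the emulated graph) forming a
directed path visiting pairwise distinct vertices. -/
def EmulatedPaths (G : PEG V) : Set (TPath V) :=
  {q | (∀ x ∈ q, x.2 < G.Γ ∧ x.1 ∈ G.E x.2) ∧ IsSimpleEdgePath (q.map Prod.fst)}

/-- A legal flow on a set `P` of (plain) labelled-edge paths of the emulated graph. -/
def IsLegalPlainFlow (G : PEG V) (P : Set (TPath V)) (F : TPath V → ℝ≥0) : Prop :=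
  ∀ (e : Edge V) (ℓ : ℕ), ℓ < G.Γ →
    ∑' p : {p : TPath V // p ∈ P ∧ (e, ℓ) ∈ p}, ((F (p : TPath V) : ℝ≥0) : ℝ≥0∞)
      ≤ chat G e ℓ

/-- The plain flow `F` on `P` achieves throughput `θ` for `m`. -/
def AchievesThroughputPlain (P : Set (TPath V)) (F : TPath V → ℝ≥0)
    (m : V → V → ℝ≥0) (θ : ℝ≥0∞) : Prop :=
  ∀ s d : V, θ * (m s d : ℝ≥0∞) ≤
    ∑' p : {p : TPath V // p ∈ P ∧ EndpointsOf (p.map Prod.fst) s d},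
      ((F (p : TPath V) : ℝ≥0) : ℝ≥0∞)

/-- `I(p)`: the set of extended paths in `P*` whose labelled-edge sequence is
identical to that of `p`. -/
def IdentSet (G : PEG V) (p : TPath V) : Set (ExtPath V) :=
  {q | q ∈ PStarStatic G ∧ q.1 = p}


section Aux

lemma E_add_mul (G : PEG V) (t k : ℕ) : G.E (t + k * G.Γ) = G.E t := by
  induction k with
  | zero => simp
  | succ k ih =>
    have h : t + (k + 1) * G.Γ = (t + k * G.Γ) + G.Γ := by ring
    rw [h, G.E_periodic, ih]

lemma E_mod (G : PEG V) (t : ℕ) : G.E (t % G.Γ) = G.E t := by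
  conv_rhs => rw [← Nat.mod_add_div' t G.Γ]
  rw [E_add_mul]

lemma fst_mem_emulated (G : PEG V) {q : ExtPath V} (hq : q ∈ PStarStatic G) :
    q.1 ∈ EmulatedPaths G := by
  obtain ⟨δ, hδ, rfl⟩ := hq
  obtain ⟨⟨hne, hE, hch, hsp⟩, hhead⟩ := hδ
  constructor
  · intro x hx
    simp only [staticOf, List.mem_map] at hx
    obtain ⟨y, hy, rfl⟩ := hx
    have hΓ := G.Γ_pos
    exact ⟨Nat.mod_lt _ (by omega), by rw [E_mod]; exact hE y hy⟩
  · have h : (staticOf G.Γ δ).1.map Prod.fst = δ.map Prod.fst := by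
      simp [staticOf, List.map_map, Function.comp]
    rw [h]; exact hsp

lemma time_bound {Γ : ℕ} : ∀ (δ : TPath V),
    δ.Chain' (fun x y : Edge V × ℕ => x.2 < y.2 ∧ y.2 ≤ x.2 + Γ) →
    ∀ a ∈ δ.head?, ∀ x ∈ δ, x.2 ≤ a.2 + Γ * δ.length := by
  intro δ
  induction δ with
  | nil => simp
  | cons a l ih =>
    intro hch a' ha' x hx
    obtain rfl : a' = a := by simpa using ha'.symm
    rcases List.mem_cons.mp hx with rfl | hx
    · exact Nat.le_add_right _ _
    · cases l with
      | nil => simp at hx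
      | cons b l' =>
        rw [List.Chain', List.isChain_cons_cons] at hch
        have h1 := ih hch.2 b (by simp) x hx
        have h2 : b.2 ≤ a'.2 + Γ := hch.1.2
        simp only [List.length_cons] at h1 ⊢
        have e1 : Γ * (l'.length + 1 + 1) = Γ * (l'.length + 1) + Γ := by ring
        rw [e1]
        generalize Γ * (l'.length + 1) = M at h1 ⊢
        omega

def lift (Γ : ℕ) : ℕ → TPath V → TPath V
  | _, [] => []
  | b, x :: rest =>
    (x.1, b + (x.2 + Γ - b % Γ) % Γ) :: lift Γ (b + (x.2 + Γ - b % Γ) % Γ + 1) rest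

lemma step_mod {Γ b ℓ : ℕ} (hℓ : ℓ < Γ) : (b + (ℓ + Γ - b % Γ) % Γ) % Γ = ℓ := by
  have hb : b % Γ ≤ ℓ + Γ := by
    have := Nat.mod_lt b (show 0 < Γ by omega)
    omega
  rw [Nat.add_mod_mod, ← Nat.mod_add_mod, Nat.add_sub_cancel' hb, Nat.add_mod_right,
    Nat.mod_eq_of_lt hℓ]

lemma lift_map_mod {Γ : ℕ} :
    ∀ (p : TPath V) (b : ℕ), (∀ x ∈ p, x.2 < Γ) →
      (lift Γ b p).map (fun x => (x.1, x.2 % Γ)) = p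
  | [], _, _ => rfl
  | x :: rest, b, h => by
    simp only [lift, List.map_cons]
    have h1 : (b + (x.2 + Γ - b % Γ) % Γ) % Γ = x.2 := step_mod (h x (by simp))
    rw [h1, lift_map_mod rest _ (fun y hy => h y (List.mem_cons_of_mem _ hy))]

lemma lift_head {Γ : ℕ} (hΓ : 0 < Γ) (p : TPath V) (b : ℕ) :
    ∀ y ∈ (lift Γ b p).head?, b ≤ y.2 ∧ y.2 < b + Γ := by
  cases p with
  | nil => simp [lift]
  | cons x rest =>
    intro y hy
    obtain rfl : (x.1, b + (x.2 + Γ - b % Γ) % Γ) = y := by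
      simpa [lift] using hy
    have h : (x.2 + Γ - b % Γ) % Γ < Γ := Nat.mod_lt _ hΓ
    simp only
    generalize (x.2 + Γ - b % Γ) % Γ = d at h ⊢
    omega

lemma lift_chain {Γ : ℕ} (hΓ : 0 < Γ) :
    ∀ (p : TPath V) (b : ℕ),
      (lift Γ b p).Chain' (fun x y : Edge V × ℕ => x.2 < y.2 ∧ y.2 ≤ x.2 + Γ)
  | [], _ => List.isChain_nil
  | x :: rest, b => by
    rw [lift, List.Chain', List.isChain_cons]
    refine ⟨fun y hy => ?_, lift_chain hΓ rest _⟩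
    have h := lift_head hΓ rest _ y hy
    simp only
    generalize (x.2 + Γ - b % Γ) % Γ = d at h ⊢
    omega

lemma ident_nonempty (G : PEG V) {p : TPath V} (hp : p ∈ EmulatedPaths G) :
    (IdentSet G p).Nonempty := by
  obtain ⟨hmem, hsp⟩ := hp
  have hΓ : 0 < G.Γ := G.Γ_pos
  have hlt : ∀ x ∈ p, x.2 < G.Γ := fun x hx => (hmem x hx).1
  set δ := lift G.Γ 0 p with hδdef
  have hmap : δ.map (fun x => (x.1, x.2 % G.Γ)) = p := lift_map_mod p 0 hlt
  have hfst : δ.map Prod.fst = p.map Prod.fst := by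
    conv_rhs => rw [← hmap]
    simp [List.map_map, Function.comp]
  have hδne : δ ≠ [] := by
    intro h
    have hpnil : p = [] := by rw [← hmap, h]; rfl
    exact hsp.1 (by rw [hpnil]; rfl)
  have hFound : δ ∈ Foundation G := by
    refine ⟨⟨hδne, ?_, lift_chain hΓ p 0, by rw [hfst]; exact hsp⟩, ?_⟩
    · intro x hx
      have hx' : (x.1, x.2 % G.Γ) ∈ p := by
        rw [← hmap]; exact List.mem_map_of_mem hx
      have := (hmem _ hx').2
      rwa [E_mod] at this
    · intro t₀ ht₀
      obtain ⟨y, hy, rfl⟩ := Option.map_eq_some_iff.mp ht₀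
      have := (lift_head hΓ p 0 y hy).2
      omega
  exact ⟨staticOf G.Γ δ, ⟨δ, hFound, rfl⟩, hmap⟩

lemma ident_finite [Finite V] (G : PEG V) (p : TPath V) : (IdentSet G p).Finite := by
  classical
  set n := p.length with hn
  set B := G.Γ * (n + 1) with hB
  have hfin : {l : List (Edge V × Fin B) | l.length ≤ n}.Finite := List.finite_length_le _ n
  refine Set.Finite.subset
    (((hfin.image (fun l : List (Edge V × Fin B) =>
      l.map (fun x => (x.1, (x.2 : ℕ))))).image (staticOf G.Γ))) ?_
  rintro q ⟨⟨δ, hδ, rfl⟩, hq1⟩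
  obtain ⟨⟨hne, hE, hch, hsp⟩, hhead⟩ := hδ
  have hlen : δ.length = n := by
    have := congrArg List.length hq1
    simpa [staticOf] using this
  obtain ⟨a, ha⟩ : ∃ a, δ.head? = some a := by
    cases δ with
    | nil => exact absurd rfl hne
    | cons a l => exact ⟨a, rfl⟩
  have haΓ : a.2 < G.Γ := hhead a.2 (by rw [ha]; rfl)
  have hbound : ∀ x ∈ δ, x.2 < B := by
    intro x hx
    have h1 := time_bound δ hch a (by rw [ha]; rfl) x hx
    rw [hlen] at h1
    have e1 : G.Γ * (n + 1) = G.Γ * n + G.Γ := by ring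
    rw [hB, e1]
    generalize G.Γ * n = M at h1 ⊢
    omega
  refine ⟨δ, ⟨δ.pmap (fun x h => (x.1, (⟨x.2, h⟩ : Fin B))) hbound, ?_, ?_⟩, rfl⟩
  · simp [hlen]
  · simp [List.map_pmap]

end Aux

def sigmaEquiv (G : PEG V) (C : TPath V → Prop) :
    {q : ExtPath V // q ∈ PStarStatic G ∧ C q.1} ≃
      (Σ p : {p : TPath V // p ∈ EmulatedPaths G ∧ C p},
        {q : ExtPath V // q ∈ IdentSet G (p : TPath V)}) where
  toFun q := ⟨⟨(q : ExtPath V).1, fst_mem_emulated G q.2.1, q.2.2⟩, ⟨q, q.2.1, rfl⟩⟩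
  invFun x := ⟨(x.2 : ExtPath V), x.2.2.1, by rw [x.2.2.2]; exact x.1.2.2⟩
  left_inv q := rfl
  right_inv x := by
    rcases x with ⟨⟨p, hp⟩, ⟨q, hq⟩⟩
    have h : q.1 = p := hq.2
    subst h
    rfl

lemma tsum_decomp (G : PEG V) (F : TPath V → ℝ≥0) (F' : ExtPath V → ℝ≥0)
    (hfin : ∀ p ∈ EmulatedPaths G, (IdentSet G p).Finite ∧ (IdentSet G p).Nonempty)
    (hF' : ∀ p ∈ EmulatedPaths G, ∀ p' ∈ IdentSet G p,
      F' p' = F p / ((IdentSet G p).ncard : ℝ≥0))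
    (C : TPath V → Prop) :
    ∑' q : {q : ExtPath V // q ∈ PStarStatic G ∧ C q.1}, ((F' (q : ExtPath V) : ℝ≥0) : ℝ≥0∞)
      = ∑' p : {p : TPath V // p ∈ EmulatedPaths G ∧ C p}, ((F (p : TPath V) : ℝ≥0) : ℝ≥0∞) := by
  classical
  rw [← (sigmaEquiv G C).symm.tsum_eq (fun q => ((F' (q : ExtPath V) : ℝ≥0) : ℝ≥0∞))]
  rw [ENNReal.tsum_sigma']
  refine tsum_congr fun p => ?_
  have hfp := hfin (p : TPath V) p.2.1
  haveI : Fintype (IdentSet G (p : TPath V)) := hfp.1.fintype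
  have hk : (IdentSet G (p : TPath V)).ncard ≠ 0 := by
    have := (Set.ncard_pos hfp.1).mpr hfp.2
    omega
  have hval : ∀ b : {q : ExtPath V // q ∈ IdentSet G (p : TPath V)},
      F' ((b : ExtPath V)) = F (p : TPath V) / ((IdentSet G (p : TPath V)).ncard : ℝ≥0) :=
    fun b => hF' _ p.2.1 _ b.2
  calc ∑' b : {q : ExtPath V // q ∈ IdentSet G (p : TPath V)},
        ((F' (((sigmaEquiv G C).symm ⟨p, b⟩ : {q : ExtPath V // q ∈ PStarStatic G ∧ C q.1}) : ExtPath V) : ℝ≥0) : ℝ≥0∞)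
      = ∑' b : {q : ExtPath V // q ∈ IdentSet G (p : TPath V)},
        ((F (p : TPath V) / ((IdentSet G (p : TPath V)).ncard : ℝ≥0) : ℝ≥0) : ℝ≥0∞) := by
        refine tsum_congr fun b => ?_
        congr 1
        exact hval b
    _ = (Fintype.card {q : ExtPath V // q ∈ IdentSet G (p : TPath V)}) •
        ((F (p : TPath V) / ((IdentSet G (p : TPath V)).ncard : ℝ≥0) : ℝ≥0) : ℝ≥0∞) := by
        rw [tsum_fintype]
        simp [Finset.sum_const]
    _ = ((F (p : TPath V) : ℝ≥0) : ℝ≥0∞) := by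
        have hc : Fintype.card {q : ExtPath V // q ∈ IdentSet G (p : TPath V)}
            = (IdentSet G (p : TPath V)).ncard := by
          rw [← Nat.card_eq_fintype_card, Nat.card_coe_set_eq]
        rw [hc, nsmul_eq_mul, ← ENNReal.coe_natCast, ← ENNReal.coe_mul]
        congr 1
        rw [mul_comm, div_mul_cancel₀]
        exact Nat.cast_ne_zero.mpr hk

/-- Lemma: from all simple paths to extended paths.
If `F` is a legal flow on the set `P` of all simple directed paths of the emulated
graph achieving throughput `θ` for `m`, then `I(p)` is nonempty and finite for every
`p ∈ P`, and the flow `F'` defined by `F'(p') = F(p)/|I(p)|` for every `p ∈ P` and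
`p' ∈ I(p)` is a legal flow on `P* = static(𝒫⁰)` achieving throughput `θ` for `m`. -/
theorem statement3 {V : Type*} [Fintype V] [DecidableEq V] (G : PEG V)
    (m : V → V → ℝ≥0) (θ : ℝ≥0∞) (F : TPath V → ℝ≥0)
    (hleg : IsLegalPlainFlow G (EmulatedPaths G) F)
    (hth : AchievesThroughputPlain (EmulatedPaths G) F m θ)
    (F' : ExtPath V → ℝ≥0)
    (hF' : ∀ p ∈ EmulatedPaths G, ∀ p' ∈ IdentSet G p,
      F' p' = F p / ((IdentSet G p).ncard : ℝ≥0)) :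
    (∀ p ∈ EmulatedPaths G, (IdentSet G p).Finite ∧ (IdentSet G p).Nonempty) ∧
      IsLegalStaticFlow G (PStarStatic G) F' ∧
      AchievesThroughputS (PStarStatic G) F' m θ := by
  have hfin : ∀ p ∈ EmulatedPaths G, (IdentSet G p).Finite ∧ (IdentSet G p).Nonempty :=
    fun p hp => ⟨ident_finite G p, ident_nonempty G hp⟩
  refine ⟨hfin, ⟨?_, ?_⟩, ?_⟩
  · intro p hp q hq h1
    rw [hF' p.1 (fst_mem_emulated G hp) p ⟨hp, rfl⟩,
      hF' q.1 (fst_mem_emulated G hq) q ⟨hq, rfl⟩, h1]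
  · intro e ℓ hℓ
    refine le_trans (le_of_eq ?_) (hleg e ℓ hℓ)
    exact tsum_decomp G F F' hfin hF' (fun p => (e, ℓ) ∈ p)
  · intro s d
    refine le_trans (hth s d) (le_of_eq ?_)
    exact (tsum_decomp G F F' hfin hF' (fun p => EndpointsOf (p.map Prod.fst) s d)).symm

end RDCN
end
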